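/- arXiv:2106.12141 — 2 statements merged into one kernel-verified Lean document; each statement's English description precedes it below -/
import Mathlib

section
/- Unweighted rooted corollary: Let D be a digraph with every vertex weight and arc weight equal to 1, and let e_* = (w_*, v_*) be a fixed arc of D. Then the number of spanning trees of the middle digraph M(D) rooted at the vertex e_* equals t(D, w_*) · (1 + d_{v_*})^{r_{v_*} − 1} · Π_{v ≠ v_*} (1 + d_v)^{r_v}, where t(D, w_*) is the number of spanning trees of D rooted at w_*, and d_v, r_v are the outdegree and indegree of v in D. -/
open scoped Classical BigOperators

section Digraph

variable {V : Type*} [Fintype V] [DecidableEq V]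

/-- `T` is a spanning in-tree (arborescence toward the root) of the digraph
with arc set containing `T`, rooted at `r`: every vertex other than `r` has
exactly one outgoing arc in `T`, the root has none, and `T` has no directed cycle. -/
def IsSpTree (T : Finset (V × V)) (r : V) : Prop :=
  (∀ v : V, v ≠ r → ∃! a : V × V, a ∈ T ∧ a.1 = v) ∧
  (∀ a ∈ T, a.1 ≠ r) ∧
  (∀ (v : V) (l : List V), ¬ List.Chain (fun a b => (a, b) ∈ T) v (l ++ [v]))

/-- The set of spanning trees of the digraph with arc set `arcs`, rooted at `r`. -/
noncomputable def trees (arcs : Finset (V × V)) (r : V) : Finset (Finset (V × V)) :=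
  arcs.powerset.filter (fun T => IsSpTree T r)

/-- Edge-weighted complexity with root `r`: `κ^{edge}(D, r, χ)`. -/
noncomputable def kappaEdgeRooted (arcs : Finset (V × V)) (χ : V × V → ℝ) (r : V) : ℝ :=
  ∑ T ∈ trees arcs r, ∏ a ∈ T, χ a

/-- Total edge-weighted complexity `κ^{edge}(D, χ)` (over all roots). -/
noncomputable def kappaEdge (arcs : Finset (V × V)) (χ : V × V → ℝ) : ℝ :=
  ∑ r : V, kappaEdgeRooted arcs χ r

/-- Vertex-weighted complexity with root `r`: `κ^{vertex}(D, r, χ)`. -/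
noncomputable def kappaVertexRooted (arcs : Finset (V × V)) (χv : V → ℝ) (r : V) : ℝ :=
  ∑ T ∈ trees arcs r, ∏ a ∈ T, χv a.2

/-- Total vertex-weighted complexity `κ^{vertex}(D, χ)` (over all roots). -/
noncomputable def kappaVertex (arcs : Finset (V × V)) (χv : V → ℝ) : ℝ :=
  ∑ r : V, kappaVertexRooted arcs χv r

/-- Weighted adjacency matrix `W`: `W_{ij} = χ_{ij}` if `(i,j)` is an arc, else `0`. -/
def adjW (arcs : Finset (V × V)) (χ : V × V → ℝ) : Matrix V V ℝ :=
  fun i j => if (i, j) ∈ arcs then χ (i, j) else 0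

/-- Edge-weighted Laplacian `Δ^{edge}`. -/
def lapEdge (arcs : Finset (V × V)) (χ : V × V → ℝ) : Matrix V V ℝ :=
  fun i j => if i = j then ∑ k ∈ Finset.univ.erase i, adjW arcs χ i k
             else - adjW arcs χ i j

/-- Vertex-weighted Laplacian `Δ^{vertex}`. -/
noncomputable def lapVertex (arcs : Finset (V × V)) (χv : V → ℝ) : Matrix V V ℝ :=
  fun u v => if u = v then ∑ a ∈ arcs.filter (fun a => a.1 = u), χv a.2
             else if (u, v) ∈ arcs then - χv v else 0

/-- Matrix obtained by deleting the row and column indexed by `v`. -/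
def minorAt (A : Matrix V V ℝ) (v : V) : Matrix {u : V // u ≠ v} {u : V // u ≠ v} ℝ :=
  A.submatrix (fun u => (u : V)) (fun u => (u : V))

/-- Out-degree of `v`. -/
def outdeg (arcs : Finset (V × V)) (v : V) : ℕ := (arcs.filter (fun a => a.1 = v)).card

/-- In-degree of `v`. -/
def indeg (arcs : Finset (V × V)) (v : V) : ℕ := (arcs.filter (fun a => a.2 = v)).card

/-- Weighted out-degree `d_v = Σ_{t(e) = v} χ_e`. -/
noncomputable def wOut (arcs : Finset (V × V)) (χ : V × V → ℝ) (v : V) : ℝ :=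
  ∑ a ∈ arcs.filter (fun a => a.1 = v), χ a

end Digraph

section MiddleDigraph

variable {V : Type*} [Fintype V] [DecidableEq V]

/-- Arc set of the middle digraph `M(D)` on the vertex set `V(D) ⊕ A(D)`:
each arc `e = (u, v)` of `D` is replaced by the directed path `u → e → v`, and
there is an arc `e → f` whenever the head of `e` equals the tail of `f`. -/
noncomputable def midArcs (arcs : Finset (V × V)) :
    Finset ((V ⊕ {a : V × V // a ∈ arcs}) × (V ⊕ {a : V × V // a ∈ arcs})) :=
  Finset.univ.filter (fun p =>
    match p with
    | (Sum.inl u, Sum.inr e) => (e : V × V).1 = u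
    | (Sum.inr e, Sum.inl v) => (e : V × V).2 = v
    | (Sum.inr e, Sum.inr f) => (e : V × V).2 = (f : V × V).1
    | _ => False)

/-- Vertex weights of `M(D)`: vertices coming from `V(D)` keep their vertex weight,
and the vertex corresponding to an arc `e` gets the arc weight `χ_e`. -/
noncomputable def midWeight (arcs : Finset (V × V)) (χv : V → ℝ) (χ : V × V → ℝ) :
    V ⊕ {a : V × V // a ∈ arcs} → ℝ :=
  Sum.elim χv (fun e => χ (e : V × V))

end MiddleDigraph


section Helpers

private lemma iterate_mod {α : Type*} (F : α → α) (x : α) {m : ℕ} (hm : 0 < m)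
    (hx : F^[m] x = x) : ∀ k, F^[k] x = F^[k % m] x := by
  intro k
  induction k using Nat.strong_induction_on with
  | _ k ih =>
    rcases lt_or_ge k m with h | h
    · rw [Nat.mod_eq_of_lt h]
    · have h1 : F^[k] x = F^[k - m] x := by
        conv_lhs => rw [show k = (k - m) + m by omega]
        rw [Function.iterate_add_apply, hx]
      rw [h1, ih (k - m) (by omega), Nat.mod_eq_sub_mod h]

private lemma exists_periodic_point {α : Type*} [Fintype α] (F : α → α) (x : α) :
    ∃ (y : α) (m : ℕ), 0 < m ∧ F^[m] y = y ∧ ∃ i : ℕ, y = F^[i] x := by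
  obtain ⟨a, b, hab, heq⟩ := Fintype.exists_ne_map_eq_of_card_lt
    (fun k : Fin (Fintype.card α + 1) => F^[(k : ℕ)] x) (by simp)
  rcases lt_or_gt_of_ne (fun h : (a : ℕ) = (b : ℕ) => hab (Fin.ext h)) with hlt | hlt
  · refine ⟨F^[(a : ℕ)] x, (b : ℕ) - a, by omega, ?_, ⟨a, rfl⟩⟩
    rw [← Function.iterate_add_apply, show (b : ℕ) - a + a = b by omega, ← heq]
  · refine ⟨F^[(b : ℕ)] x, (a : ℕ) - b, by omega, ?_, ⟨b, rfl⟩⟩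
    rw [← Function.iterate_add_apply, show (a : ℕ) - b + b = a by omega, heq]

private lemma chain_eq_map_range {α : Type*} {R : α → α → Prop} {F : α → α}
    (hR : ∀ a b, R a b → b = F a) :
    ∀ (l : List α) (x : α), List.Chain R x l →
      l = (List.range l.length).map (fun k => F^[k + 1] x) := by
  intro l
  induction l with
  | nil => intro x _; rfl
  | cons b t ih =>
    intro x hc
    replace hc := List.isChain_cons_cons.mp hc
    obtain ⟨h1, h2⟩ := hc
    have hb : b = F x := hR _ _ h1
    have ht := ih b h2
    simp only [List.length_cons, List.range_succ_eq_map, List.map_cons, List.map_map]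
    refine List.cons_eq_cons.mpr ⟨by simp [hb], ?_⟩
    conv_lhs => rw [ht]
    apply List.map_congr_left
    intro k _
    simp only [Function.comp_apply, hb]
    rw [show k + 1 + 1 = (k + 1) + 1 by rfl, Function.iterate_succ_apply]
    simp

private lemma chain_of_iterate {α : Type*} {R : α → α → Prop} {F : α → α} :
    ∀ (m : ℕ) (x : α), (∀ k, R (F^[k] x) (F^[k + 1] x)) →
      List.Chain R x ((List.range m).map (fun k => F^[k + 1] x))
  | 0, x, _ => List.Chain.nil
  | (m + 1), x, h => by
    rw [List.range_succ_eq_map, List.map_cons, List.map_map]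
    refine List.Chain.cons (by simpa using h 0) ?_
    have hrec := chain_of_iterate m (F x)
      (fun k => by
        have := h (k + 1)
        rwa [Function.iterate_succ_apply, Function.iterate_succ_apply] at this)
    have hmaps : (List.range m).map ((fun k => F^[k + 1] x) ∘ Nat.succ)
        = (List.range m).map (fun k => F^[k + 1] (F x)) := by
      apply List.map_congr_left
      intro k _
      simp only [Function.comp_apply]
      rw [show k.succ + 1 = (k + 1) + 1 from rfl, Function.iterate_succ_apply]
    rw [hmaps]
    exact hrec

private lemma chain_head_ne {α : Type*} {R : α → α → Prop} {r : α}
    (hR : ∀ a b, R a b → a ≠ r) :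
    ∀ (l : List α) (x y : α), List.Chain R x (l ++ [y]) → ∀ z ∈ x :: l, z ≠ r := by
  intro l
  induction l with
  | nil =>
    intro x y hc z hz
    simp only [List.nil_append, List.chain_cons, List.Chain.nil] at hc
    simp only [List.mem_singleton] at hz
    subst hz
    exact hR _ _ (List.isChain_cons_cons.mp hc).1
  | cons b t ih =>
    intro x y hc z hz
    rw [List.cons_append] at hc
    replace hc := List.isChain_cons_cons.mp hc
    rcases List.mem_cons.mp hz with rfl | hz'
    · exact hR _ _ hc.1
    · exact ih b y hc.2 z hz'

private lemma count_row {W : Type*} [Fintype W] [DecidableEq W]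
    (arcs : Finset (W × W)) (u : W) :
    ∑ v : W, (if (u, v) ∈ arcs then (1 : ℝ) else 0)
      = ((arcs.filter (fun a => a.1 = u)).card : ℝ) := by
  rw [Finset.sum_boole]
  congr 1
  apply Finset.card_bij (fun v _ => (u, v))
  · intro v hv
    simp only [Finset.mem_filter, Finset.mem_univ, true_and] at hv
    exact Finset.mem_filter.mpr ⟨hv, rfl⟩
  · intro v _ v' _ h
    exact (Prod.mk.injEq _ _ _ _).mp h |>.2
  · intro a ha
    rw [Finset.mem_filter] at ha
    have hae : (u, a.2) = a := by rw [← ha.2]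
    refine ⟨a.2, ?_, hae⟩
    simp only [Finset.mem_filter, Finset.mem_univ, true_and]
    rw [hae]; exact ha.1

private lemma sum_subtype_indicator {α : Type*} [DecidableEq α] (s : Finset α)
    (p : α → Prop) [DecidablePred p] :
    ∑ f : {a // a ∈ s}, (if p f.1 then (1 : ℝ) else 0)
      = ((s.filter p).card : ℝ) := by
  rw [Finset.univ_eq_attach, Finset.sum_attach s (fun a => if p a then (1 : ℝ) else 0),
    Finset.sum_boole]

private theorem perm_apply_inv_self {α : Type*} (f : Equiv.Perm α) (x : α) : f (f⁻¹ x) = x :=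
  f.apply_symm_apply x

end Helpers

section MTT

open Matrix

private def GoodFun {V : Type*} [DecidableEq V] (r : V) (sg : V → V × V) : Prop :=
  ∀ u, ∃ k : ℕ, (fun w => if w = r then r else (sg w).2)^[k] u = r

private lemma lapEdge_one_eq {W : Type*} [Fintype W] [DecidableEq W]
    (arcs : Finset (W × W)) (hl : ∀ w : W, (w, w) ∉ arcs) (u v : W) :
    lapEdge arcs (fun _ => 1) u v
      = (if u = v then ((arcs.filter (fun a => a.1 = u)).card : ℝ) else 0)
        - (if (u, v) ∈ arcs then 1 else 0) := by
  unfold lapEdge adjW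
  by_cases h : u = v
  · subst h
    rw [if_pos rfl, if_pos rfl, if_neg (hl u), sub_zero]
    rw [Finset.sum_erase _ (by simp [hl u]), count_row]
  · rw [if_neg h, if_neg h, zero_sub]

theorem matrixTree {V : Type*} [Fintype V] [DecidableEq V]
    (arcs : Finset (V × V)) (hl : ∀ v : V, (v, v) ∉ arcs) (r : V) :
    ((trees arcs r).card : ℝ)
      = (Matrix.updateRow (lapEdge arcs (fun _ => 1)) r (Pi.single r 1)).det := by
  classical
  set A : V → Finset (V × V) :=
    fun u => if u = r then {(r, r)} else arcs.filter (fun a => a.1 = u) with hA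
  set g : V → (V × V) → (V → ℝ) :=
    fun u a => if u = r then Pi.single r 1 else (Pi.single u 1 - Pi.single a.2 1) with hg
  have hrow : Matrix.updateRow (lapEdge arcs (fun _ => 1)) r (Pi.single r 1)
      = Matrix.of (fun u => ∑ a ∈ A u, g u a) := by
    ext u v
    by_cases hu : u = r
    · subst hu
      simp [hA, hg]
    · rw [Matrix.updateRow_ne hu]
      simp only [hA, hg, if_neg hu, Matrix.of_apply, Finset.sum_apply, Pi.sub_apply]
      rw [lapEdge_one_eq arcs hl, Finset.sum_sub_distrib]
      congr 1
      · rw [Finset.sum_const]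
        rcases eq_or_ne u v with rfl | hne
        · simp [Pi.single_apply]
        · simp [Pi.single_apply, hne, Ne.symm hne]
      · have hptw : ∀ a ∈ arcs, (if a.1 = u then (if v = a.2 then (1:ℝ) else 0) else 0)
            = if a = (u, v) then 1 else 0 := by
          intro a _
          by_cases h1 : a = (u, v)
          · subst h1; simp
          · rcases eq_or_ne a.1 u with h2 | h2
            · have h3 : v ≠ a.2 := fun hv => h1 (Prod.ext h2 hv.symm)
              simp [h2, h3, h1]
            · simp [h2, h1]
        rw [Finset.sum_congr rfl (fun a ha => by rw [Pi.single_apply]),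
          Finset.sum_filter, Finset.sum_congr rfl hptw, Finset.sum_ite_eq' arcs (u, v)]
  rw [hrow]
  have hexp : (Matrix.of fun u => ∑ a ∈ A u, g u a).det
      = ∑ σ ∈ Fintype.piFinset A, (Matrix.of fun u => g u (σ u)).det :=
    (Matrix.detRowAlternating).toMultilinearMap.map_sum_finset g A
  rw [hexp]
  have hterm : ∀ σ ∈ Fintype.piFinset A,
      (Matrix.of fun u => g u (σ u)).det = if GoodFun r σ then (1:ℝ) else 0 := by
    intro σ hσmem
    set F : V → V := fun w => if w = r then r else (σ w).2 with hF
    have hN : (Matrix.of fun u => g u (σ u))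
        = Matrix.of (fun u v => (if u = v then (1:ℝ) else 0)
            - (if u ≠ r ∧ v = F u then 1 else 0)) := by
      ext u v
      by_cases hu : u = r
      · subst hu
        simp [hg, Pi.single_apply, eq_comm]
      · have hFu : F u = (σ u).2 := if_neg hu
        simp only [hg, Matrix.of_apply, hFu]
        rw [if_neg hu]
        simp only [Pi.sub_apply, Pi.single_apply, ne_eq, hu, not_false_eq_true, true_and]
        congr 1
        exact if_congr eq_comm rfl rfl
    have hGiff : GoodFun r σ ↔ ∀ u : V, ∃ k : ℕ, F^[k] u = r := Iff.rfl
    by_cases hgood : ∀ u : V, ∃ k : ℕ, F^[k] u = r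
    · rw [if_pos (hGiff.mpr hgood), hN, Matrix.det_apply]
      rw [Finset.sum_eq_single (1 : Equiv.Perm V)]
      · rw [Equiv.Perm.sign_one, one_smul]
        apply Finset.prod_eq_one
        intro i _
        simp only [Equiv.Perm.one_apply, Matrix.of_apply, if_pos rfl]
        have hiter : ∀ (h : i = F i) (k : ℕ), F^[k] i = i := by
          intro h k
          induction k with
          | zero => rfl
          | succ k ih => rw [Function.iterate_succ_apply', ih, ← h]
        have hni : ¬ (i ≠ r ∧ i = F i) := by
          rintro ⟨hir, hfix⟩
          obtain ⟨k, hk⟩ := hgood i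
          exact hir ((hiter hfix k).symm.trans hk)
        simp [hni]
      · intro π _ hπ
        have hex : ∃ i, ((if π i = i then (1:ℝ) else 0)
            - (if π i ≠ r ∧ i = F (π i) then 1 else 0)) = 0 := by
          by_contra hno
          push_neg at hno
          have hstep : ∀ i : V, π i ≠ i → (π i ≠ r ∧ i = F (π i)) := by
            intro i hii
            by_contra hcon
            exact hno i (by rw [if_neg hii, if_neg hcon, sub_zero])
          have key : ∀ u : V, π u ≠ u → (u ≠ r ∧ π (F u) ≠ F u) := by
            intro u hu
            have hinv : π (π⁻¹ u) ≠ π⁻¹ u := by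
              rw [perm_apply_inv_self]
              intro h
              exact hu ((congrArg π h).trans (perm_apply_inv_self π u))
            obtain ⟨h1, h2⟩ := hstep _ hinv
            rw [perm_apply_inv_self] at h1 h2
            refine ⟨h1, ?_⟩
            rw [← h2]
            exact hinv
          obtain ⟨u₀, hu₀⟩ := not_forall.mp
            (fun h : ∀ x : V, π x = x => hπ (Equiv.ext h))
          have hmoved : ∀ k : ℕ, π (F^[k] u₀) ≠ F^[k] u₀ := by
            intro k
            induction k with
            | zero => exact hu₀
            | succ k ih =>
              rw [Function.iterate_succ_apply']
              -- need : F of a moved point is moved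
              have h2 := hstep _ ih
              have h3 : F (F^[k] u₀) = π⁻¹ (F^[k] u₀) := by
                have hinv : π (π⁻¹ (F^[k] u₀)) ≠ π⁻¹ (F^[k] u₀) := by
                  rw [perm_apply_inv_self]
                  intro h
                  exact ih ((congrArg π h).trans (perm_apply_inv_self π _))
                have h4 := (hstep _ hinv).2
                rw [perm_apply_inv_self] at h4
                exact h4.symm
              rw [h3]
              intro h
              exact ih (by
                have := congrArg π h
                rwa [perm_apply_inv_self] at this)
          obtain ⟨k, hk⟩ := hgood u₀
          exact (key _ (hmoved k)).1 hk
        obtain ⟨i, hi⟩ := hex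
        have hzero : (Matrix.of (fun u v => (if u = v then (1:ℝ) else 0)
            - (if u ≠ r ∧ v = F u then 1 else 0))) (π i) i = 0 := hi
        have hprod0 : (∏ j, (Matrix.of (fun u v => (if u = v then (1:ℝ) else 0)
            - (if u ≠ r ∧ v = F u then 1 else 0))) (π j) j) = 0 :=
          Finset.prod_eq_zero (Finset.mem_univ i) hzero
        rw [hprod0, smul_zero]
      · intro h
        exact absurd (Finset.mem_univ 1) h
    · rw [if_neg (fun h => hgood (hGiff.mp h)), hN]
      apply Matrix.exists_vecMul_eq_zero_iff.mp
      push_neg at hgood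
      obtain ⟨u₀, h0⟩ := hgood
      obtain ⟨u₁, m, hm, hper, i, hi⟩ := exists_periodic_point F u₀
      have hnr : ∀ k : ℕ, F^[k] u₁ ≠ r := by
        intro k
        rw [hi, ← Function.iterate_add_apply]
        exact h0 (k + i)
      set C : Finset V := Finset.univ.filter (fun x => ∃ k : ℕ, F^[k] u₁ = x) with hC
      have hmemC : ∀ x, x ∈ C ↔ ∃ k : ℕ, F^[k] u₁ = x := by
        intro x; simp [hC]
      have hFC : ∀ x ∈ C, F x ∈ C := by
        intro x hx
        obtain ⟨k, hk⟩ := (hmemC x).mp hx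
        exact (hmemC _).mpr ⟨k + 1, by rw [Function.iterate_succ_apply', hk]⟩
      have hCr : ∀ x ∈ C, x ≠ r := by
        intro x hx
        obtain ⟨k, hk⟩ := (hmemC x).mp hx
        exact hk ▸ hnr k
      have himg : C.image F = C := by
        apply Finset.Subset.antisymm
        · intro y hy
          obtain ⟨x, hx, hxy⟩ := Finset.mem_image.mp hy
          exact hxy ▸ hFC x hx
        · intro x hx
          obtain ⟨k, hk⟩ := (hmemC x).mp hx
          refine Finset.mem_image.mpr ⟨F^[k + m - 1] u₁, (hmemC _).mpr ⟨k + m - 1, rfl⟩, ?_⟩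
          have h5 : F (F^[k + m - 1] u₁) = F^[k + m] u₁ := by
            conv_rhs => rw [show k + m = (k + m - 1) + 1 by omega]
            rw [Function.iterate_succ_apply']
          rw [h5, Function.iterate_add_apply, hper, hk]
      have hinjC : Set.InjOn F (C : Set V) := Finset.injOn_of_card_image_eq (by rw [himg])
      refine ⟨(fun x => if x ∈ C then (1:ℝ) else 0), ?_, ?_⟩
      · intro h
        have h1 := congrFun h u₁
        simp only [Pi.zero_apply, if_pos ((hmemC u₁).mpr ⟨0, rfl⟩)] at h1
        exact one_ne_zero h1
      · funext x
        simp only [Matrix.vecMul, dotProduct, Matrix.of_apply, Pi.zero_apply]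
        have hsummand : ∀ u : V, (if u ∈ C then (1:ℝ) else 0)
              * ((if u = x then (1:ℝ) else 0) - (if u ≠ r ∧ x = F u then 1 else 0))
            = (if u ∈ C then ((if u = x then (1:ℝ) else 0) - (if F u = x then 1 else 0))
              else 0) := by
          intro u
          by_cases hu : u ∈ C
          · rw [if_pos hu, if_pos hu, one_mul]
            congr 1
            by_cases hfu : F u = x
            · rw [if_pos hfu, if_pos ⟨hCr u hu, hfu.symm⟩]
            · rw [if_neg hfu, if_neg (fun hc => hfu hc.2.symm)]
          · rw [if_neg hu, if_neg hu, zero_mul]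
        rw [Finset.sum_congr rfl (fun u _ => hsummand u), Finset.sum_ite_mem,
          Finset.univ_inter, Finset.sum_sub_distrib]
        have hs1 : ∑ u ∈ C, (if u = x then (1:ℝ) else 0) = if x ∈ C then 1 else 0 :=
          Finset.sum_ite_eq' C x (fun _ => (1:ℝ))
        have hs2 : ∑ u ∈ C, (if F u = x then (1:ℝ) else 0) = if x ∈ C then 1 else 0 := by
          rw [Finset.sum_boole]
          by_cases hx : x ∈ C
          · rw [if_pos hx]
            have hx' : x ∈ C.image F := by rw [himg]; exact hx
            obtain ⟨u, hu, hux⟩ := Finset.mem_image.mp hx'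
            have hone : C.filter (fun u => F u = x) = {u} := by
              apply Finset.eq_singleton_iff_unique_mem.mpr
              refine ⟨Finset.mem_filter.mpr ⟨hu, hux⟩, ?_⟩
              intro y hy
              rw [Finset.mem_filter] at hy
              exact hinjC (Finset.mem_coe.mpr hy.1) (Finset.mem_coe.mpr hu)
                (hy.2.trans hux.symm)
            rw [hone, Finset.card_singleton, Nat.cast_one]
          · rw [if_neg hx]
            have hnone : C.filter (fun u => F u = x) = ∅ := by
              apply Finset.filter_eq_empty_iff.mpr
              intro u hu hux
              exact hx (hux ▸ hFC u hu)
            rw [hnone, Finset.card_empty, Nat.cast_zero]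
        rw [hs1, hs2, sub_self]
  rw [Finset.sum_congr rfl hterm, Finset.sum_boole]
  congr 1
  symm
  apply Finset.card_bij (fun (σ : V → V × V) (_ : σ ∈ (Fintype.piFinset A).filter
    (fun σ => GoodFun r σ)) => Finset.image σ (Finset.univ.erase r))
  -- (i) maps into trees
  · intro σ hσ
    rw [Finset.mem_filter] at hσ
    obtain ⟨hσp, hσg⟩ := hσ
    have hσA := Fintype.mem_piFinset.mp hσp
    have hmem : ∀ u : V, u ≠ r → (σ u ∈ arcs ∧ (σ u).1 = u) := by
      intro u hu
      have h1 := hσA u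
      simp only [hA, if_neg hu] at h1
      exact Finset.mem_filter.mp h1
    set F : V → V := fun w => if w = r then r else (σ w).2 with hF
    have hσg' : ∀ u : V, ∃ k : ℕ, F^[k] u = r := hσg
    rw [trees, Finset.mem_filter, Finset.mem_powerset]
    refine ⟨?_, ?_, ?_, ?_⟩
    · intro a ha
      obtain ⟨u, hu, rfl⟩ := Finset.mem_image.mp ha
      exact (hmem u (Finset.mem_erase.mp hu).1).1
    · intro v hv
      refine ⟨σ v, ⟨Finset.mem_image_of_mem σ (Finset.mem_erase.mpr ⟨hv, Finset.mem_univ v⟩),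
        (hmem v hv).2⟩, ?_⟩
      rintro b ⟨hbT, hb1⟩
      obtain ⟨w, hw, rfl⟩ := Finset.mem_image.mp hbT
      have hw1 := (hmem w (Finset.mem_erase.mp hw).1).2
      have : w = v := hw1.symm.trans hb1
      rw [this]
    · intro a ha
      obtain ⟨u, hu, rfl⟩ := Finset.mem_image.mp ha
      rw [(hmem u (Finset.mem_erase.mp hu).1).2]
      exact (Finset.mem_erase.mp hu).1
    · intro v l hchain
      have hRstep : ∀ a b : V, (a, b) ∈ Finset.image σ (Finset.univ.erase r)
          → (a ≠ r ∧ b = F a) := by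
        intro a b hab
        obtain ⟨w, hw, heq⟩ := Finset.mem_image.mp hab
        have hwr := (Finset.mem_erase.mp hw).1
        have h1 := (hmem w hwr).2
        have hfst : (σ w).1 = a := by rw [heq]
        have haw : a = w := hfst.symm.trans h1
        subst haw
        refine ⟨hwr, ?_⟩
        have hsnd : (σ a).2 = b := by rw [heq]
        simp only [hF]
        rw [if_neg hwr]
        exact hsnd.symm
      have hlist := chain_eq_map_range (R := fun a b => (a, b) ∈ Finset.image σ
        (Finset.univ.erase r)) (F := F) (fun a b hab => (hRstep a b hab).2) (l ++ [v]) v hchain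
      have hne := chain_head_ne (r := r) (fun a b hab => (hRstep a b hab).1) l v v hchain
      have hlast : F^[l.length + 1] v = v := by
        have h2 := congrArg List.getLast? hlist
        rw [List.getLast?_concat] at h2
        have h3 : (l ++ [v]).length = l.length + 1 := by simp
        rw [h3, List.range_succ, List.map_append, List.map_singleton,
          List.getLast?_concat] at h2
        exact (Option.some_inj.mp h2).symm
      have hmeml : ∀ j, j < l.length → F^[j + 1] v ∈ l := by
        intro j hj
        have h2 := congrArg (fun t => List.take l.length t) hlist
        simp only [List.take_left] at h2
        have h3 : (l ++ [v]).length = l.length + 1 := by simp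
        rw [h3, List.range_succ, List.map_append,
          List.take_left' (by simp)] at h2
        rw [h2]
        exact List.mem_map.mpr ⟨j, List.mem_range.mpr hj, rfl⟩
      have hner : ∀ k : ℕ, F^[k] v ≠ r := by
        intro k
        rw [iterate_mod F v (show 0 < l.length + 1 by omega) hlast k]
        have hj : k % (l.length + 1) < l.length + 1 := Nat.mod_lt _ (by omega)
        rcases Nat.eq_zero_or_pos (k % (l.length + 1)) with hz | hp
        · rw [hz]
          exact hne v (List.mem_cons_self (a := v) (l := l))
        · obtain ⟨j', hj'⟩ : ∃ j', k % (l.length + 1) = j' + 1 := ⟨k % (l.length + 1) - 1, by omega⟩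
          rw [hj']
          exact hne _ (List.mem_cons_of_mem v (hmeml j' (by omega)))
      obtain ⟨k, hk⟩ := hσg' v
      exact hner k hk
  -- (ii) injective
  · intro σ hσ σ' hσ' heq
    rw [Finset.mem_filter] at hσ hσ'
    have hA1 := Fintype.mem_piFinset.mp hσ.1
    have hA2 := Fintype.mem_piFinset.mp hσ'.1
    funext u
    by_cases hu : u = r
    · have h1 := hA1 u; have h2 := hA2 u
      simp only [hA, if_pos hu, Finset.mem_singleton] at h1 h2
      rw [h1, h2]
    · have h1 : σ u ∈ Finset.image σ' (Finset.univ.erase r) := by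
        rw [← heq]
        exact Finset.mem_image_of_mem σ (Finset.mem_erase.mpr ⟨hu, Finset.mem_univ u⟩)
      obtain ⟨w, hw, hww⟩ := Finset.mem_image.mp h1
      have hwr := (Finset.mem_erase.mp hw).1
      have ht1 : (σ u).1 = u := by
        have := hA1 u; simp only [hA, if_neg hu] at this
        exact (Finset.mem_filter.mp this).2
      have ht2 : (σ' w).1 = w := by
        have := hA2 w; simp only [hA, if_neg hwr] at this
        exact (Finset.mem_filter.mp this).2
      have hwu : w = u := by rw [← ht2, hww, ht1]
      rw [← hww, hwu]
  -- (iii) surjective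
  · intro T hT
    rw [trees, Finset.mem_filter, Finset.mem_powerset] at hT
    obtain ⟨hTsub, hT1, hT2, hT3⟩ := hT
    have hchoice : ∀ u : V, u ≠ r → ∃ a : V × V, a ∈ T ∧ a.1 = u := fun u hu => (hT1 u hu).exists
    set σ : V → V × V := fun u => if hu : u = r then (r, r) else (hchoice u hu).choose
      with hσdef
    have hspec : ∀ (u : V) (hu : u ≠ r), σ u ∈ T ∧ (σ u).1 = u := by
      intro u hu
      simp only [hσdef, dif_neg hu]
      exact (hchoice u hu).choose_spec
    have hσp : σ ∈ Fintype.piFinset A := by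
      rw [Fintype.mem_piFinset]
      intro u
      by_cases hu : u = r
      · subst hu; simp [hσdef, hA]
      · simp only [hA, if_neg hu]
        exact Finset.mem_filter.mpr ⟨hTsub (hspec u hu).1, (hspec u hu).2⟩
    set F : V → V := fun w => if w = r then r else (σ w).2 with hF
    have hgood : ∀ u : V, ∃ k : ℕ, F^[k] u = r := by
      intro u
      by_contra hbad
      push_neg at hbad
      obtain ⟨u₁, m, hm, hper, i, hi⟩ := exists_periodic_point F u
      have hnr : ∀ k : ℕ, F^[k] u₁ ≠ r := fun k => by
        rw [hi, ← Function.iterate_add_apply]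
        exact hbad (k + i)
      have hstep : ∀ k : ℕ, (fun a b => (a, b) ∈ T) (F^[k] u₁) (F^[k + 1] u₁) := by
        intro k
        have hx := hnr k
        have hs := hspec _ hx
        have hFx : F (F^[k] u₁) = (σ (F^[k] u₁)).2 := by
          simp only [hF]; rw [if_neg hx]
        rw [Function.iterate_succ_apply', hFx]
        have hpair : (F^[k] u₁, (σ (F^[k] u₁)).2) = σ (F^[k] u₁) :=
          Prod.ext hs.2.symm rfl
        rw [hpair]
        exact hs.1
      obtain ⟨m', rfl⟩ : ∃ m', m = m' + 1 := ⟨m - 1, by omega⟩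
      have hchain := chain_of_iterate (R := fun a b => (a, b) ∈ T) (m' + 1) u₁ hstep
      rw [List.range_succ, List.map_append, List.map_singleton, hper] at hchain
      exact hT3 u₁ _ hchain
    refine ⟨σ, Finset.mem_filter.mpr ⟨hσp, hgood⟩, ?_⟩
    apply Finset.Subset.antisymm
    · intro a ha
      obtain ⟨u, hu, rfl⟩ := Finset.mem_image.mp ha
      exact (hspec u (Finset.mem_erase.mp hu).1).1
    · intro a ha
      have har := hT2 a ha
      have hu : σ a.1 = a := by
        have h1 := hspec a.1 har
        exact (hT1 a.1 har).unique ⟨h1.1, h1.2⟩ ⟨ha, rfl⟩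
      rw [← hu]
      exact Finset.mem_image_of_mem σ (Finset.mem_erase.mpr ⟨har, Finset.mem_univ _⟩)

end MTT

section MidApp

open Matrix

variable {V : Type*} [Fintype V] [DecidableEq V]

private def bA (arcs : Finset (V × V)) : Matrix V V ℝ :=
  fun u v => if u = v then (outdeg arcs u : ℝ) else 0

private def bB (arcs : Finset (V × V)) : Matrix V {a : V × V // a ∈ arcs} ℝ :=
  fun u f => if (f : V × V).1 = u then -1 else 0

private def bC (arcs : Finset (V × V)) (e0 : {a : V × V // a ∈ arcs}) :
    Matrix {a : V × V // a ∈ arcs} V ℝ :=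
  fun e v => if e = e0 then 0 else if (e : V × V).2 = v then -1 else 0

private def bD (arcs : Finset (V × V)) (e0 : {a : V × V // a ∈ arcs}) :
    Matrix {a : V × V // a ∈ arcs} {a : V × V // a ∈ arcs} ℝ :=
  fun e f => if e = e0 then (if f = e0 then 1 else 0)
    else (if e = f then (1 + outdeg arcs (e : V × V).2 : ℝ) else 0)
      - (if (f : V × V).1 = (e : V × V).2 then 1 else 0)

private def bC2 (arcs : Finset (V × V)) (e0 : {a : V × V // a ∈ arcs}) :
    Matrix {a : V × V // a ∈ arcs} V ℝ :=
  fun e v => if e = e0 then 0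
    else if (e : V × V).2 = v then -(1 + outdeg arcs (e : V × V).2 : ℝ) else 0

private noncomputable def bD2 (arcs : Finset (V × V)) (e0 : {a : V × V // a ∈ arcs}) :
    Matrix {a : V × V // a ∈ arcs} {a : V × V // a ∈ arcs} ℝ :=
  Matrix.diagonal (fun e => if e = e0 then 1 else (1 + outdeg arcs (e : V × V).2 : ℝ))

private lemma hloop_mid {arcs : Finset (V × V)} (hs : ∀ v : V, (v, v) ∉ arcs)
    (e : {a : V × V // a ∈ arcs}) : (e : V × V).2 ≠ (e : V × V).1 := by
  intro he
  obtain ⟨⟨a, b⟩, hab⟩ := e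
  simp only at he
  rw [he] at hab
  exact hs a hab

private lemma mid_loopless {arcs : Finset (V × V)} (hs : ∀ v : V, (v, v) ∉ arcs) :
    ∀ x : V ⊕ {a : V × V // a ∈ arcs}, (x, x) ∉ midArcs arcs := by
  intro x hx
  rcases x with u | e
  · simp [midArcs] at hx
  · simp only [midArcs, Finset.mem_filter, Finset.mem_univ, true_and] at hx
    exact hloop_mid hs e hx

private lemma mid_lap_eq (arcs : Finset (V × V)) (hs : ∀ v : V, (v, v) ∉ arcs)
    (e0 : {a : V × V // a ∈ arcs}) :
    Matrix.updateRow (lapEdge (midArcs arcs) (fun _ => 1)) (Sum.inr e0)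
        (Pi.single (Sum.inr e0) 1)
      = Matrix.fromBlocks (bA arcs) (bB arcs) (bC arcs e0) (bD arcs e0) := by
  ext x y
  rcases x with u | e
  · rw [Matrix.updateRow_ne (by simp : (Sum.inl u : V ⊕ {a : V × V // a ∈ arcs}) ≠ Sum.inr e0)]
    rcases y with v | f
    · rw [Matrix.fromBlocks_apply₁₁]
      rcases eq_or_ne u v with rfl | huv
      · rw [show lapEdge (midArcs arcs) (fun _ => 1) (Sum.inl u) (Sum.inl u)
            = ∑ k ∈ Finset.univ.erase (Sum.inl u : V ⊕ {a : V × V // a ∈ arcs}),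
              adjW (midArcs arcs) (fun _ => 1) (Sum.inl u) k from if_pos rfl]
        rw [Finset.sum_erase _ (by simp [adjW, midArcs])]
        rw [Fintype.sum_sum_type]
        rw [Finset.sum_congr rfl (fun v _ => show adjW (midArcs arcs) (fun _ => 1)
          (Sum.inl u) (Sum.inl v) = 0 by simp [adjW, midArcs])]
        rw [Finset.sum_congr rfl (fun f (_ : f ∈ Finset.univ) =>
          show adjW (midArcs arcs) (fun _ => 1) (Sum.inl u) (Sum.inr f)
            = if (f : V × V).1 = u then (1:ℝ) else 0 by simp [adjW, midArcs])]
        rw [Finset.sum_const_zero, zero_add, sum_subtype_indicator arcs (fun a => a.1 = u)]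
        simp [bA, outdeg]
      · rw [show lapEdge (midArcs arcs) (fun _ => 1) (Sum.inl u) (Sum.inl v)
            = - adjW (midArcs arcs) (fun _ => 1) (Sum.inl u) (Sum.inl v)
          from if_neg (by simp [huv])]
        simp [bA, adjW, midArcs, huv]
    · rw [Matrix.fromBlocks_apply₁₂]
      rw [show lapEdge (midArcs arcs) (fun _ => 1) (Sum.inl u) (Sum.inr f)
          = - adjW (midArcs arcs) (fun _ => 1) (Sum.inl u) (Sum.inr f) from if_neg (by simp)]
      simp only [adjW, midArcs, Finset.mem_filter, Finset.mem_univ, true_and, bB]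
      split_ifs <;> simp
  · by_cases he : e = e0
    · subst he
      rw [Matrix.updateRow_self]
      rcases y with v | f
      · rw [Matrix.fromBlocks_apply₂₁]
        simp [bC, Pi.single_apply]
      · rw [Matrix.fromBlocks_apply₂₂]
        simp [bD, Pi.single_apply, Sum.inr.injEq]
    · rw [Matrix.updateRow_ne (by simp [he])]
      rcases y with v | f
      · rw [Matrix.fromBlocks_apply₂₁]
        rw [show lapEdge (midArcs arcs) (fun _ => 1) (Sum.inr e) (Sum.inl v)
            = - adjW (midArcs arcs) (fun _ => 1) (Sum.inr e) (Sum.inl v) from if_neg (by simp)]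
        simp only [adjW, midArcs, Finset.mem_filter, Finset.mem_univ, true_and, bC, if_neg he]
        split_ifs <;> simp
      · rw [Matrix.fromBlocks_apply₂₂]
        rcases eq_or_ne e f with rfl | hef
        · rw [show lapEdge (midArcs arcs) (fun _ => 1) (Sum.inr e) (Sum.inr e)
              = ∑ k ∈ Finset.univ.erase (Sum.inr e : V ⊕ {a : V × V // a ∈ arcs}),
                adjW (midArcs arcs) (fun _ => 1) (Sum.inr e) k from if_pos rfl]
          rw [Finset.sum_erase _ (by simp [adjW, midArcs, hloop_mid hs e])]
          rw [Fintype.sum_sum_type]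
          rw [Finset.sum_congr rfl (fun v (_ : v ∈ Finset.univ) =>
            show adjW (midArcs arcs) (fun _ => 1) (Sum.inr e) (Sum.inl v)
              = if (e : V × V).2 = v then (1:ℝ) else 0 by simp [adjW, midArcs])]
          rw [Finset.sum_congr rfl (fun f (_ : f ∈ Finset.univ) =>
            show adjW (midArcs arcs) (fun _ => 1) (Sum.inr e) (Sum.inr f)
              = if (e : V × V).2 = (f : V × V).1 then (1:ℝ) else 0 by simp [adjW, midArcs])]
          rw [Finset.sum_ite_eq Finset.univ ((e : V × V).2) (fun _ => (1:ℝ)),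
            if_pos (Finset.mem_univ _), sum_subtype_indicator arcs (fun a => (e : V × V).2 = a.1)]
          rw [show arcs.filter (fun a => (e : V × V).2 = a.1)
              = arcs.filter (fun a => a.1 = (e : V × V).2) from
            Finset.filter_congr (fun a _ => eq_comm)]
          have hb : bD arcs e0 e e = (1 + (outdeg arcs (e : V × V).2 : ℝ)) := by
            have hne : ¬((e : V × V).1 = (e : V × V).2) := fun h => hloop_mid hs e h.symm
            simp [bD, if_neg he, hne]
          rw [hb]
          simp [outdeg, add_comm]
        · rw [show lapEdge (midArcs arcs) (fun _ => 1) (Sum.inr e) (Sum.inr f)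
              = - adjW (midArcs arcs) (fun _ => 1) (Sum.inr e) (Sum.inr f)
            from if_neg (by simp [hef])]
          simp only [adjW, midArcs, Finset.mem_filter, Finset.mem_univ, true_and, bD,
            if_neg he, if_neg hef]
          by_cases hc : (e : V × V).2 = (f : V × V).1
          · rw [if_pos hc, if_pos hc.symm, zero_sub]
          · rw [if_neg hc, if_neg (fun h => hc h.symm), sub_zero, neg_zero]

private lemma hm1 (arcs : Finset (V × V)) (hs : ∀ v : V, (v, v) ∉ arcs)
    (e0 : {a : V × V // a ∈ arcs}) :
    Matrix.fromBlocks (1 : Matrix V V ℝ) 0 (bC arcs e0) 1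
        * Matrix.fromBlocks (bA arcs) (bB arcs) (bC arcs e0) (bD arcs e0)
      = Matrix.fromBlocks (bA arcs) (bB arcs) (bC2 arcs e0) (bD2 arcs e0) := by
  rw [Matrix.fromBlocks_multiply]
  simp only [Matrix.one_mul, Matrix.zero_mul, Matrix.mul_zero, Matrix.mul_one,
    add_zero, zero_add]
  rw [Matrix.fromBlocks_inj]
  refine ⟨rfl, rfl, ?_, ?_⟩
  · -- bC * bA + bC = bC2
    ext e v
    rw [Matrix.add_apply, Matrix.mul_apply]
    rw [Finset.sum_congr rfl (fun x (_ : x ∈ Finset.univ) =>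
      show bC arcs e0 e x * bA arcs x v
        = if x = v then bC arcs e0 e x * (outdeg arcs v : ℝ) else 0 by
          by_cases hx : x = v
          · subst hx; simp [bA]
          · simp [bA, hx])]
    rw [Finset.sum_ite_eq' Finset.univ v (fun x => bC arcs e0 e x * (outdeg arcs v : ℝ)),
      if_pos (Finset.mem_univ v)]
    simp only [bC, bC2]
    split_ifs <;> simp_all <;> ring
  · -- bC * bB + bD = bD2
    ext e f
    rw [Matrix.add_apply, Matrix.mul_apply]
    by_cases he : e = e0
    · rw [Finset.sum_congr rfl (fun v (_ : v ∈ Finset.univ) =>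
        show bC arcs e0 e v * bB arcs v f = 0 by simp [bC, he]), Finset.sum_const_zero, zero_add]
      by_cases hf : f = e0
      · simp [bD, bD2, Matrix.diagonal_apply, he, hf]
      · have hef : e ≠ f := fun h => hf (h.symm.trans he)
        simp [bD, bD2, Matrix.diagonal_apply, he, hf, hef,
          (show e0 ≠ f from fun h => hf h.symm)]
    · rw [Finset.sum_congr rfl (fun v (_ : v ∈ Finset.univ) =>
        show bC arcs e0 e v * bB arcs v f
          = if (e : V × V).2 = v then (if (f : V × V).1 = v then (1:ℝ) else 0) else 0 by
            simp only [bC, bB, if_neg he]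
            split_ifs <;> simp_all)]
      rw [Finset.sum_ite_eq Finset.univ ((e : V × V).2)
        (fun v => if (f : V × V).1 = v then (1:ℝ) else 0), if_pos (Finset.mem_univ _)]
      have hne : ¬((e : V × V).1 = (e : V × V).2) := fun h => hloop_mid hs e h.symm
      simp only [bD, bD2, Matrix.diagonal_apply, if_neg he]
      rcases eq_or_ne e f with rfl | hef
      · simp [hne]
      · simp [hef]

private lemma hm2 (arcs : Finset (V × V)) (e0 : {a : V × V // a ∈ arcs}) :
    Matrix.fromBlocks (bA arcs) (bB arcs) (bC2 arcs e0) (bD2 arcs e0)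
      = Matrix.fromBlocks (1 : Matrix V V ℝ) 0 0 (bD2 arcs e0)
        * Matrix.fromBlocks (bA arcs) (bB arcs) (bC arcs e0) 1 := by
  rw [Matrix.fromBlocks_multiply]
  simp only [Matrix.one_mul, Matrix.zero_mul, Matrix.mul_zero, Matrix.mul_one,
    add_zero, zero_add]
  rw [Matrix.fromBlocks_inj]
  refine ⟨rfl, rfl, ?_, rfl⟩
  · -- bC2 = bD2 * bC
    symm
    ext e v
    rw [bD2, Matrix.diagonal_mul]
    simp only [bC, bC2]
    split_ifs <;> simp_all <;> ring

private lemma hm3 (arcs : Finset (V × V)) (e0 : {a : V × V // a ∈ arcs}) :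
    Matrix.fromBlocks (bA arcs) (bB arcs) (bC arcs e0) 1
        * Matrix.fromBlocks (1 : Matrix V V ℝ) 0 (-(bC arcs e0)) 1
      = Matrix.fromBlocks (bA arcs - bB arcs * bC arcs e0) (bB arcs) 0 1 := by
  rw [Matrix.fromBlocks_multiply]
  simp only [Matrix.one_mul, Matrix.zero_mul, Matrix.mul_zero, Matrix.mul_one,
    add_zero, zero_add, Matrix.mul_neg, mul_one]
  rw [Matrix.fromBlocks_inj]
  exact ⟨(sub_eq_add_neg _ _).symm, rfl, add_neg_cancel _, rfl⟩

end MidApp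

section Final

open Matrix

variable {V : Type*} [Fintype V] [DecidableEq V]

private lemma lapEdge_one_eq' (arcs : Finset (V × V)) (hs : ∀ v : V, (v, v) ∉ arcs) (u v : V) :
    lapEdge arcs (fun _ => 1) u v
      = (if u = v then (outdeg arcs u : ℝ) else 0) - (if (u, v) ∈ arcs then 1 else 0) := by
  rw [lapEdge_one_eq arcs hs u v, outdeg]

private lemma hX (arcs : Finset (V × V)) (hs : ∀ v : V, (v, v) ∉ arcs)
    (e0 : {a : V × V // a ∈ arcs}) :
    bA arcs - bB arcs * bC arcs e0
      = Matrix.updateRow (lapEdge arcs (fun _ => 1)) (e0 : V × V).1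
          (lapEdge arcs (fun _ => 1) (e0 : V × V).1 + Pi.single (e0 : V × V).2 1) := by
  ext u v
  have hBC : (bB arcs * bC arcs e0) u v
      = (if (u, v) ∈ arcs then (1:ℝ) else 0) - (if (u, v) = (e0 : V × V) then 1 else 0) := by
    rw [Matrix.mul_apply]
    rw [Finset.sum_congr rfl (fun f (_ : f ∈ Finset.univ) =>
      show bB arcs u f * bC arcs e0 f v
        = if (¬((f : V × V) = (e0 : V × V)) ∧ (f : V × V).1 = u ∧ (f : V × V).2 = v)
          then (1:ℝ) else 0 by
        by_cases hfe : f = e0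
        · have hfe2 : (f : V × V) = (e0 : V × V) := by rw [hfe]
          simp [bB, bC, hfe, hfe2]
        · have hfe' : ¬((f : V × V) = (e0 : V × V)) := fun h => hfe (Subtype.ext h)
          simp only [bB, bC, if_neg hfe, hfe', not_false_eq_true, true_and]
          split_ifs <;> simp_all)]
    rw [sum_subtype_indicator arcs
      (fun a => (¬(a = (e0 : V × V)) ∧ a.1 = u ∧ a.2 = v))]
    by_cases hme : (u, v) = (e0 : V × V)
    · have hempty : arcs.filter (fun a => (¬(a = (e0 : V × V)) ∧ a.1 = u ∧ a.2 = v)) = ∅ := by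
        apply Finset.filter_eq_empty_iff.mpr
        intro a _
        rintro ⟨hne, h1, h2⟩
        exact hne (by rw [← hme]; exact Prod.ext h1 h2)
      rw [hempty, Finset.card_empty, Nat.cast_zero, if_pos hme,
        if_pos (by rw [hme]; exact e0.2), sub_self]
    · have hfeq : arcs.filter (fun a => (¬(a = (e0 : V × V)) ∧ a.1 = u ∧ a.2 = v))
          = arcs.filter (fun a => a = (u, v)) := by
        apply Finset.filter_congr
        intro a _
        constructor
        · rintro ⟨_, h1, h2⟩; exact Prod.ext h1 h2
        · rintro rfl; exact ⟨hme, rfl, rfl⟩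
      rw [hfeq, Finset.filter_eq' arcs (u, v), if_neg hme, sub_zero]
      by_cases hm : (u, v) ∈ arcs
      · rw [if_pos hm, if_pos hm, Finset.card_singleton, Nat.cast_one]
      · rw [if_neg hm, if_neg hm, Finset.card_empty, Nat.cast_zero]
  rw [Matrix.sub_apply, hBC]
  by_cases hu : u = (e0 : V × V).1
  · rw [hu, Matrix.updateRow_self, Pi.add_apply, lapEdge_one_eq' arcs hs, Pi.single_apply]
    by_cases hv : v = (e0 : V × V).2
    · have hp : (((e0 : V × V).1, v)) = (e0 : V × V) := by rw [hv]
      simp only [bA, hp, if_pos rfl, if_pos hv, hu, if_true]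
      ring
    · have hp : ¬((((e0 : V × V).1, v)) = (e0 : V × V)) := fun h => hv (by rw [← h])
      simp only [bA, if_neg hp, if_neg hv, hu]
      ring
  · rw [Matrix.updateRow_ne hu, lapEdge_one_eq' arcs hs]
    have hne : ¬((u, v) = (e0 : V × V)) := fun h => hu (by rw [← h])
    rw [bA, if_neg hne, sub_zero]

private lemma rowsum0 (arcs : Finset (V × V)) (hs : ∀ v : V, (v, v) ∉ arcs) (u : V) :
    ∑ v : V, lapEdge arcs (fun _ => 1) u v = 0 := by
  rw [Finset.sum_congr rfl (fun v _ => lapEdge_one_eq' arcs hs u v), Finset.sum_sub_distrib]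
  rw [Finset.sum_ite_eq Finset.univ u (fun _ => (outdeg arcs u : ℝ)),
    if_pos (Finset.mem_univ u)]
  rw [count_row arcs u, outdeg, sub_self]

private lemma det_updateRow_zero (arcs : Finset (V × V)) (hs : ∀ v : V, (v, v) ∉ arcs)
    (r : V) (w : V → ℝ) (hw : ∑ v : V, w v = 0) :
    (Matrix.updateRow (lapEdge arcs (fun _ => 1)) r w).det = 0 := by
  apply Matrix.exists_mulVec_eq_zero_iff.mp
  refine ⟨(fun _ => 1), ?_, ?_⟩
  · intro h
    exact one_ne_zero (congrFun h r)
  · funext u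
    simp only [Matrix.mulVec, dotProduct, mul_one, Pi.zero_apply]
    by_cases hu : u = r
    · rw [Finset.sum_congr rfl (fun v (_ : v ∈ Finset.univ) => by rw [hu, Matrix.updateRow_self])]
      exact hw
    · rw [Finset.sum_congr rfl (fun v (_ : v ∈ Finset.univ) => by rw [Matrix.updateRow_ne hu])]
      exact rowsum0 arcs hs u

private lemma prod_bD2 (arcs : Finset (V × V)) (e0 : {a : V × V // a ∈ arcs}) :
    (bD2 arcs e0).det
      = (((1 + outdeg arcs (e0 : V × V).2) ^ (indeg arcs (e0 : V × V).2 - 1)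
          * ∏ v ∈ Finset.univ.erase (e0 : V × V).2, (1 + outdeg arcs v) ^ (indeg arcs v) : ℕ)
          : ℝ) := by
  rw [bD2, Matrix.det_diagonal]
  rw [Finset.prod_congr rfl (fun e (_ : e ∈ Finset.univ) =>
    show (if e = e0 then (1:ℝ) else (1 + outdeg arcs (e : V × V).2 : ℝ))
      = (fun a : V × V => if a = (e0 : V × V) then (1:ℝ) else (1 + outdeg arcs a.2 : ℝ)) (e : V × V)
    from by
      by_cases h : e = e0
      · simp only [if_pos h, (show (e : V × V) = (e0 : V × V) from by rw [h]), if_pos rfl,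
          if_true]
      · simp only [if_neg h, if_neg (fun hh : (e : V × V) = (e0 : V × V) => h (Subtype.ext hh))])]
  rw [Finset.univ_eq_attach,
    Finset.prod_attach arcs (fun a => if a = (e0 : V × V) then (1:ℝ) else (1 + outdeg arcs a.2))]
  rw [← Finset.mul_prod_erase arcs _ e0.2, if_pos rfl, one_mul]
  rw [Finset.prod_congr rfl (fun a ha => if_neg (Finset.ne_of_mem_erase ha))]
  rw [← Finset.prod_fiberwise (arcs.erase (e0 : V × V)) (fun a => a.2)
    (fun a => (1 + outdeg arcs a.2 : ℝ))]
  rw [Finset.prod_congr rfl (fun v (_ : v ∈ Finset.univ) =>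
    show (∏ a ∈ (arcs.erase (e0 : V × V)).filter (fun a => a.2 = v),
        ((1 : ℝ) + outdeg arcs a.2))
      = ((1 + outdeg arcs v : ℝ)) ^ (((arcs.erase (e0 : V × V)).filter
          (fun a => a.2 = v)).card) from by
      rw [Finset.prod_congr rfl (fun a ha => by
        rw [(Finset.mem_filter.mp ha).2]), Finset.prod_const])]
  have hcard : ∀ v : V, ((arcs.erase (e0 : V × V)).filter (fun a => a.2 = v)).card
      = if v = (e0 : V × V).2 then indeg arcs v - 1 else indeg arcs v := by
    intro v
    rw [Finset.filter_erase]
    by_cases hv : v = (e0 : V × V).2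
    · rw [if_pos hv, Finset.card_erase_of_mem (Finset.mem_filter.mpr ⟨e0.2, hv.symm⟩), indeg]
    · rw [if_neg hv, Finset.erase_eq_of_notMem, indeg]
      intro hmem
      exact hv ((Finset.mem_filter.mp hmem).2).symm
  rw [Finset.prod_congr rfl (fun v (_ : v ∈ Finset.univ) => by rw [hcard v])]
  rw [← Finset.mul_prod_erase Finset.univ _ (Finset.mem_univ (e0 : V × V).2), if_pos rfl]
  rw [Finset.prod_congr rfl (fun v hv => by rw [if_neg (Finset.ne_of_mem_erase hv)])]
  push_cast
  ring

end Final

/-- **Unweighted rooted corollary.** For a fixed arc `e⋆ = (w⋆, v⋆)` of `D`, the number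
of spanning trees of `M(D)` rooted at the vertex `e⋆` equals
`t(D, w⋆) · (1 + d_{v⋆})^{r_{v⋆}−1} · Π_{v ≠ v⋆} (1 + d_v)^{r_v}`. -/
theorem treeCount_middle_rooted {V : Type*} [Fintype V] [DecidableEq V]
    (arcs : Finset (V × V)) (hsimple : ∀ v : V, (v, v) ∉ arcs)
    (estar : V × V) (hestar : estar ∈ arcs) :
    (trees (midArcs arcs) (Sum.inr ⟨estar, hestar⟩)).card =
      (trees arcs estar.1).card *
        (1 + outdeg arcs estar.2) ^ (indeg arcs estar.2 - 1) *
        ∏ v ∈ Finset.univ.erase estar.2, (1 + outdeg arcs v) ^ (indeg arcs v) := by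
  classical
  set e0 : {a : V × V // a ∈ arcs} := ⟨estar, hestar⟩ with he0
  have hco : (e0 : V × V) = estar := rfl
  have h1 := matrixTree (midArcs arcs) (mid_loopless hsimple) (Sum.inr e0)
  have h2 := matrixTree arcs hsimple estar.1
  rw [mid_lap_eq arcs hsimple e0] at h1
  -- determinant chain
  have step1 : (Matrix.fromBlocks (bA arcs) (bB arcs) (bC arcs e0) (bD arcs e0)).det
      = (Matrix.fromBlocks (bA arcs) (bB arcs) (bC2 arcs e0) (bD2 arcs e0)).det := by
    rw [← hm1 arcs hsimple e0, Matrix.det_mul,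
      Matrix.det_fromBlocks_zero₁₂, Matrix.det_one, Matrix.det_one, one_mul, one_mul]
  have step2 : (Matrix.fromBlocks (bA arcs) (bB arcs) (bC2 arcs e0) (bD2 arcs e0)).det
      = (bD2 arcs e0).det
        * (Matrix.fromBlocks (bA arcs) (bB arcs) (bC arcs e0)
            (1 : Matrix {a : V × V // a ∈ arcs} {a : V × V // a ∈ arcs} ℝ)).det := by
    rw [hm2 arcs e0, Matrix.det_mul, Matrix.det_fromBlocks_zero₂₁, Matrix.det_one, one_mul]
  have step3 : (Matrix.fromBlocks (bA arcs) (bB arcs) (bC arcs e0)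
        (1 : Matrix {a : V × V // a ∈ arcs} {a : V × V // a ∈ arcs} ℝ)).det
      = (bA arcs - bB arcs * bC arcs e0).det := by
    have hdet2 : (Matrix.fromBlocks (1 : Matrix V V ℝ) 0 (-(bC arcs e0)) 1).det = 1 := by
      rw [Matrix.det_fromBlocks_zero₁₂, Matrix.det_one, Matrix.det_one, one_mul]
    calc (Matrix.fromBlocks (bA arcs) (bB arcs) (bC arcs e0)
          (1 : Matrix {a : V × V // a ∈ arcs} {a : V × V // a ∈ arcs} ℝ)).det
        = (Matrix.fromBlocks (bA arcs) (bB arcs) (bC arcs e0)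
            (1 : Matrix {a : V × V // a ∈ arcs} {a : V × V // a ∈ arcs} ℝ)).det
          * (Matrix.fromBlocks (1 : Matrix V V ℝ) 0 (-(bC arcs e0)) 1).det := by
          rw [hdet2, mul_one]
      _ = ((Matrix.fromBlocks (bA arcs) (bB arcs) (bC arcs e0)
            (1 : Matrix {a : V × V // a ∈ arcs} {a : V × V // a ∈ arcs} ℝ))
          * (Matrix.fromBlocks (1 : Matrix V V ℝ) 0 (-(bC arcs e0)) 1)).det :=
          (Matrix.det_mul _ _).symm
      _ = (Matrix.fromBlocks (bA arcs - bB arcs * bC arcs e0) (bB arcs) 0 1).det := by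
          rw [hm3 arcs e0]
      _ = (bA arcs - bB arcs * bC arcs e0).det := by
          rw [Matrix.det_fromBlocks_zero₂₁, Matrix.det_one, mul_one]
  have step4 : (bA arcs - bB arcs * bC arcs e0).det = ((trees arcs estar.1).card : ℝ) := by
    rw [hX arcs hsimple e0, hco]
    rw [Matrix.det_updateRow_add, Matrix.updateRow_eq_self]
    have hlap0 : (lapEdge arcs (fun _ => 1)).det = 0 := by
      rw [← Matrix.updateRow_eq_self (lapEdge arcs (fun _ => 1)) estar.1]
      exact det_updateRow_zero arcs hsimple estar.1 _ (rowsum0 arcs hsimple estar.1)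
    rw [hlap0, zero_add]
    have hsplit : (Pi.single estar.2 1 : V → ℝ)
        = ((Pi.single estar.2 1 : V → ℝ) - (Pi.single estar.1 1 : V → ℝ))
          + (Pi.single estar.1 1 : V → ℝ) := by
      funext x
      simp only [Pi.add_apply, Pi.sub_apply]
      ring
    rw [hsplit, Matrix.det_updateRow_add]
    have hzero : (Matrix.updateRow (lapEdge arcs (fun _ => 1)) estar.1
        (Pi.single estar.2 1 - Pi.single estar.1 1)).det = 0 := by
      apply det_updateRow_zero arcs hsimple
      simp only [Pi.sub_apply]
      rw [Finset.sum_sub_distrib]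
      have hs1 : ∀ (a : V), ∑ v : V, Pi.single a (1:ℝ) v = 1 := by
        intro a
        rw [Finset.sum_congr rfl (fun v (_ : v ∈ Finset.univ) => Pi.single_apply a (1:ℝ) v),
          Finset.sum_ite_eq' Finset.univ a (fun _ => (1:ℝ)), if_pos (Finset.mem_univ a)]
      rw [hs1, hs1, sub_self]
    rw [hzero, zero_add, ← h2]
  have hfinal : ((trees (midArcs arcs) (Sum.inr e0)).card : ℝ)
      = ((trees arcs estar.1).card : ℝ)
        * ((((1 + outdeg arcs estar.2) ^ (indeg arcs estar.2 - 1)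
          * ∏ v ∈ Finset.univ.erase estar.2, (1 + outdeg arcs v) ^ (indeg arcs v)) : ℕ) : ℝ) := by
    rw [h1, step1, step2, step3, step4, prod_bD2 arcs e0, hco]
    ring
  have hcast : (((trees (midArcs arcs) (Sum.inr e0)).card : ℕ) : ℝ)
      = ((((trees arcs estar.1).card *
        (1 + outdeg arcs estar.2) ^ (indeg arcs estar.2 - 1) *
        ∏ v ∈ Finset.univ.erase estar.2, (1 + outdeg arcs v) ^ (indeg arcs v)) : ℕ) : ℝ) := by
    push_cast
    push_cast at hfinal
    linear_combination hfinal
  exact Nat.cast_injective hcast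
end

section
/- Block determinant computation: Let F be an invertible n×n diagonal matrix, M an n×m matrix, L an m×n matrix, Q an n×n diagonal matrix, and S an invertible m×m matrix. Then det([[λI_n − F, M],[LQ, λI_m − S + LM]]) = det(λI_n − F) · det(λI_m − S) · det(I_n − (Q(λI_n − F)^{−1} − I_n) · M (λI_m − S)^{−1} L), whenever λI_n − F and λI_m − S are invertible. -/
/-- **Block determinant computation.** For an invertible diagonal `F`, diagonal `Q`,
and invertible `S`, whenever `λI − F` and `λI − S` are invertible,
`det [[λI−F, M],[LQ, λI−S+LM]] = det(λI−F) · det(λI−S) ·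
det(I − (Q(λI−F)⁻¹ − I) M (λI−S)⁻¹ L)`. -/
theorem block_det_computation {n m : Type*} [Fintype n] [Fintype m]
    [DecidableEq n] [DecidableEq m]
    (F Q : Matrix n n ℝ) (M : Matrix n m ℝ) (L : Matrix m n ℝ) (S : Matrix m m ℝ)
    (lam : ℝ)
    (hF : F.IsDiag) (hQ : Q.IsDiag) (hFinv : IsUnit F.det) (hSinv : IsUnit S.det)
    (h1 : IsUnit (lam • (1 : Matrix n n ℝ) - F).det)
    (h2 : IsUnit (lam • (1 : Matrix m m ℝ) - S).det) :
    (Matrix.fromBlocks (lam • (1 : Matrix n n ℝ) - F) M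
        (L * Q) (lam • (1 : Matrix m m ℝ) - S + L * M)).det =
      (lam • (1 : Matrix n n ℝ) - F).det * (lam • (1 : Matrix m m ℝ) - S).det *
        ((1 : Matrix n n ℝ) -
          (Q * (lam • (1 : Matrix n n ℝ) - F)⁻¹ - 1) * M *
            (lam • (1 : Matrix m m ℝ) - S)⁻¹ * L).det := by
  set A := lam • (1 : Matrix n n ℝ) - F with hA
  set D := lam • (1 : Matrix m m ℝ) - S with hD
  haveI : Invertible A := A.invertibleOfIsUnitDet h1
  haveI : Invertible D := D.invertibleOfIsUnitDet h2
  rw [Matrix.det_fromBlocks₁₁, Matrix.invOf_eq_nonsing_inv]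
  have key : D + L * M - L * Q * A⁻¹ * M
      = D * (1 + (-(D⁻¹ * L)) * ((Q * A⁻¹ - 1) * M)) := by
    have hexp : (-(D⁻¹ * L)) * ((Q * A⁻¹ - 1) * M)
        = D⁻¹ * (L * M - L * Q * A⁻¹ * M) := by
      simp only [Matrix.sub_mul, Matrix.one_mul, Matrix.mul_sub, Matrix.neg_mul,
        neg_sub, Matrix.mul_assoc]
      abel
    rw [hexp, Matrix.mul_add, Matrix.mul_one, ← Matrix.mul_assoc,
      Matrix.mul_nonsing_inv _ h2, Matrix.one_mul, add_sub_assoc]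
  rw [key, Matrix.det_mul, Matrix.det_one_add_mul_comm, mul_assoc]
  congr 2
  simp only [Matrix.mul_neg, Matrix.mul_assoc, sub_eq_add_neg]
end
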